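/- Fix a real number q > 1 and an integer n ≥ 1. Then ψ_z(n) is real for every real z with 0 < z < τ/2, and there exists a real z with 0 < z < τ/2 such that ψ_z(n) = 0. -/

import Mathlib

/-- `q^w = exp(w log q)`. -/
noncomputable def qpow (q : ℝ) (w : ℂ) : ℂ := Complex.exp (w * (Real.log q : ℂ))

/-- `τ = 2π / log q`. -/
noncomputable def tauq (q : ℝ) : ℝ := 2 * Real.pi / Real.log q

/-- The elementary spherical function value `φ_z(n)` on a homogeneous tree of degree
`q+1`: `φ_z(0) = 1` and for `n ≥ 1`,
`φ_z(n) = (1/(q+1))·[q^{1-n/2}(q^{iz(n+1)} - q^{-iz(n+1)}) - q^{-n/2}(q^{iz(n-1)} - q^{-iz(n-1)})] / (q^{iz} - q^{-iz})`. -/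
noncomputable def phiSph (q : ℝ) (z : ℂ) (n : ℕ) : ℂ :=
  if n = 0 then 1 else
    (1 / ((q : ℂ) + 1)) *
      ((qpow q (1 - (n : ℂ) / 2) *
          (qpow q (Complex.I * z * ((n : ℂ) + 1)) - qpow q (-(Complex.I * z) * ((n : ℂ) + 1))) -
        qpow q (-(n : ℂ) / 2) *
          (qpow q (Complex.I * z * ((n : ℂ) - 1)) - qpow q (-(Complex.I * z) * ((n : ℂ) - 1)))) /
        (qpow q (Complex.I * z) - qpow q (-(Complex.I * z))))

/-- `B_n = 1 + ∑_{j=1}^n (q+1) q^{j-1}`, the volume of the ball of radius `n`. -/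
noncomputable def ballVol (q : ℝ) (n : ℕ) : ℝ :=
  1 + ∑ j ∈ Finset.Icc 1 n, (q + 1) * q ^ (j - 1)

/-- The ball-average symbol `ψ_z(n) = (1/B_n)·(1 + ∑_{j=1}^n (q+1) q^{j-1} φ_z(j))`. -/
noncomputable def psiBall (q : ℝ) (z : ℂ) (n : ℕ) : ℂ :=
  (1 / ((ballVol q n : ℝ) : ℂ)) *
    (1 + ∑ j ∈ Finset.Icc 1 n, (((q + 1) * q ^ (j - 1) : ℝ) : ℂ) * phiSph q z j)

/-! ### Auxiliary real-valued versions -/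

lemma qpow_real' (q c : ℝ) : qpow q (c : ℂ) = ((Real.exp (c * Real.log q) : ℝ) : ℂ) := by
  unfold qpow
  rw [← Complex.ofReal_mul, Complex.ofReal_exp]

lemma qpow_I_sub' (q z c : ℝ) :
    qpow q (Complex.I * (z:ℂ) * (c:ℂ)) - qpow q (-(Complex.I * (z:ℂ)) * (c:ℂ))
      = 2 * Real.sin (c * (z * Real.log q)) * Complex.I := by
  unfold qpow
  rw [show Complex.I * (z:ℂ) * (c:ℂ) * (Real.log q : ℂ)
      = ((c * (z * Real.log q) : ℝ) : ℂ) * Complex.I by push_cast; ring,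
    show -(Complex.I * (z:ℂ)) * (c:ℂ) * (Real.log q : ℂ)
      = ((-(c * (z * Real.log q)) : ℝ) : ℂ) * Complex.I by push_cast; ring,
    Complex.exp_mul_I, Complex.exp_mul_I]
  simp [← Complex.ofReal_cos, ← Complex.ofReal_sin, Real.cos_neg, Real.sin_neg]
  push_cast
  ring

/-- Real-valued version of `phiSph` in terms of `θ = z log q`. -/
noncomputable def phiR (q θ : ℝ) (n : ℕ) : ℝ :=
  if n = 0 then 1 else
    (1 / (q + 1)) *
      ((Real.exp ((1 - (n : ℝ) / 2) * Real.log q) * Real.sin (((n : ℝ) + 1) * θ) -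
        Real.exp ((-(n : ℝ) / 2) * Real.log q) * Real.sin (((n : ℝ) - 1) * θ)) /
        Real.sin θ)

lemma phiSph_eq' (q z : ℝ) (n : ℕ) :
    phiSph q (z : ℂ) n = ((phiR q (z * Real.log q) n : ℝ) : ℂ) := by
  unfold phiSph phiR
  by_cases h : n = 0
  · simp [h]
  · simp only [h, if_neg, if_false]
    have e1 : (1 : ℂ) - (n : ℂ) / 2 = ((1 - (n : ℝ) / 2 : ℝ) : ℂ) := by push_cast; ring
    have e2 : -(n : ℂ) / 2 = ((-(n : ℝ) / 2 : ℝ) : ℂ) := by push_cast; ring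
    have e3 : (n : ℂ) + 1 = (((n : ℝ) + 1 : ℝ) : ℂ) := by push_cast; ring
    have e4 : (n : ℂ) - 1 = (((n : ℝ) - 1 : ℝ) : ℂ) := by push_cast; ring
    have e5 : qpow q (Complex.I * (z:ℂ)) - qpow q (-(Complex.I * (z:ℂ)))
        = 2 * Real.sin (z * Real.log q) * Complex.I := by
      have := qpow_I_sub' q z 1
      simpa using this
    rw [e1, e2, e3, e4, qpow_real', qpow_real', qpow_I_sub', qpow_I_sub', e5]
    set a := Real.exp ((1 - (n : ℝ) / 2) * Real.log q)
    set b := Real.exp ((-(n : ℝ) / 2) * Real.log q)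
    set s1 := Real.sin (((n:ℝ) + 1) * (z * Real.log q))
    set s2 := Real.sin (((n:ℝ) - 1) * (z * Real.log q))
    set s := Real.sin (z * Real.log q)
    have h2I : (2 * Complex.I) ≠ 0 := by
      simp [Complex.I_ne_zero]
    have key : ((a:ℂ) * (2 * (s1:ℂ) * Complex.I) - (b:ℂ) * (2 * (s2:ℂ) * Complex.I))
        / (2 * (s:ℂ) * Complex.I)
        = (((a * s1 - b * s2) / s : ℝ) : ℂ) := by
      rw [show (a:ℂ) * (2 * (s1:ℂ) * Complex.I) - (b:ℂ) * (2 * (s2:ℂ) * Complex.I)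
          = (((a * s1 - b * s2 : ℝ)) : ℂ) * (2 * Complex.I) by push_cast; ring,
        show 2 * (s:ℂ) * Complex.I = ((s : ℝ) : ℂ) * (2 * Complex.I) by push_cast; ring,
        mul_div_mul_right _ _ h2I, ← Complex.ofReal_div]
    rw [key]
    push_cast
    ring

/-- `psiBall` at a real point is a (cast of a) real number. -/
lemma psiBall_eq' (q z : ℝ) (n : ℕ) :
    psiBall q (z : ℂ) n
      = (((1 / ballVol q n) *
          (1 + ∑ j ∈ Finset.Icc 1 n, (q + 1) * q ^ (j - 1) * phiR q (z * Real.log q) j)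
          : ℝ) : ℂ) := by
  unfold psiBall
  simp only [phiSph_eq']
  push_cast
  ring

/-- The key telescoping identity. -/
lemma telescope' (q θ : ℝ) (hq : 1 < q) (hs : Real.sin θ ≠ 0) (n : ℕ) :
    (1 + ∑ j ∈ Finset.Icc 1 n, (q + 1) * q ^ (j - 1) * phiR q θ j) * Real.sin θ
      = Real.exp ((n : ℝ) / 2 * Real.log q) * Real.sin (((n : ℝ) + 1) * θ)
        + Real.exp (((n : ℝ) - 1) / 2 * Real.log q) * Real.sin ((n : ℝ) * θ) := by
  have hq0 : (0:ℝ) < q := lt_trans one_pos hq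
  have hq1 : q + 1 ≠ 0 := by positivity
  induction n with
  | zero => simp
  | succ m ih =>
    rw [Finset.sum_Icc_succ_top (by omega : 1 ≤ m + 1)]
    have hqpow : (q : ℝ) ^ (m + 1 - 1) = Real.exp ((m : ℝ) * Real.log q) := by
      rw [← Real.exp_log hq0, ← Real.exp_nat_mul]
      norm_num
    have e1 : Real.exp ((m:ℝ) * Real.log q) *
        Real.exp ((1 - (((m:ℕ)+1 : ℕ) : ℝ) / 2) * Real.log q)
        = Real.exp (((m:ℝ) + 1) / 2 * Real.log q) := by
      rw [← Real.exp_add]; push_cast; ring_nf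
    have e2 : Real.exp ((m:ℝ) * Real.log q) *
        Real.exp ((-((((m:ℕ)+1 : ℕ)) : ℝ) / 2) * Real.log q)
        = Real.exp (((m:ℝ) - 1) / 2 * Real.log q) := by
      rw [← Real.exp_add]; push_cast; ring_nf
    have hphi : (q + 1) * q ^ (m + 1 - 1) * phiR q θ (m + 1) * Real.sin θ
        = Real.exp (((m:ℝ) + 1) / 2 * Real.log q) * Real.sin (((m : ℝ) + 2) * θ)
          - Real.exp (((m:ℝ) - 1) / 2 * Real.log q) * Real.sin ((m : ℝ) * θ) := by
      rw [phiR, if_neg (by omega), hqpow]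
      have expand : (q + 1) * Real.exp ((m:ℝ) * Real.log q) *
          ((1 / (q + 1)) *
            ((Real.exp ((1 - (((m+1):ℕ) : ℝ) / 2) * Real.log q) *
                Real.sin (((((m+1):ℕ)) : ℝ) * θ + θ) -
              Real.exp ((-((((m+1):ℕ)) : ℝ) / 2) * Real.log q) *
                Real.sin (((((m+1):ℕ)) : ℝ) * θ - θ)) / Real.sin θ)) * Real.sin θ
          = Real.exp ((m:ℝ) * Real.log q) *
            (Real.exp ((1 - (((m+1):ℕ) : ℝ) / 2) * Real.log q) *
                Real.sin (((((m+1):ℕ)) : ℝ) * θ + θ) -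
              Real.exp ((-((((m+1):ℕ)) : ℝ) / 2) * Real.log q) *
                Real.sin (((((m+1):ℕ)) : ℝ) * θ - θ)) := by
        field_simp
      rw [show ((((m+1):ℕ)) : ℝ) + 1 = (((m+1):ℕ) : ℝ) * 1 + 1 by ring] at *
      push_cast at expand ⊢
      rw [show ((m:ℝ) + 1) * 1 + 1 = (m:ℝ) + 2 by ring] at *
      rw [show ((m:ℝ)+1) * θ + θ = ((m:ℝ) + 2) * θ by ring,
        show ((m:ℝ)+1) * θ - θ = (m:ℝ) * θ by ring] at expand
      rw [show ((m:ℝ) + 1 - 1) * θ = (m:ℝ) * θ by ring]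
      rw [expand]
      push_cast at e1 e2
      linear_combination Real.sin (((m:ℝ)+2) * θ) * e1 - Real.sin ((m:ℝ) * θ) * e2
    push_cast at ih hphi ⊢
    rw [show ((m:ℝ) + 1 + 1) = (m:ℝ) + 2 by ring, show ((m:ℝ) + 1 - 1) / 2 = (m:ℝ) / 2 by ring]
    linear_combination ih + hphi

lemma exists_zero_ge2' (q : ℝ) (n : ℕ) (hn : 2 ≤ n) :
    ∃ c : ℝ, 0 < c ∧ c < Real.pi ∧
      Real.exp ((n : ℝ) / 2 * Real.log q) * Real.sin (((n : ℝ) + 1) * c)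
        + Real.exp (((n : ℝ) - 1) / 2 * Real.log q) * Real.sin ((n : ℝ) * c) = 0 := by
  set L := Real.log q with hL
  set F : ℝ → ℝ := fun θ =>
    Real.exp ((n : ℝ) / 2 * L) * Real.sin (((n : ℝ) + 1) * θ)
      + Real.exp (((n : ℝ) - 1) / 2 * L) * Real.sin ((n : ℝ) * θ) with hF
  have hpi := Real.pi_pos
  have hn1 : (0:ℝ) < (n:ℝ) + 1 := by positivity
  have hn2 : (2:ℝ) < (n:ℝ) + 1 := by
    have : (2:ℝ) ≤ (n:ℝ) := by exact_mod_cast hn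
    linarith
  set a := Real.pi / ((n:ℝ) + 1) with ha
  set b := 2 * Real.pi / ((n:ℝ) + 1) with hb
  have hab : a ≤ b := by rw [ha, hb]; gcongr; linarith
  have ha0 : 0 < a := by positivity
  have hbpi : b < Real.pi := by
    rw [hb, div_lt_iff₀ hn1]
    nlinarith
  have hFa : 0 < F a := by
    rw [hF]
    simp only
    rw [show ((n:ℝ) + 1) * a = Real.pi by rw [ha]; field_simp]
    rw [Real.sin_pi, mul_zero, zero_add]
    have harg : (n:ℝ) * a = Real.pi - a := by
      rw [ha]; field_simp; ring
    rw [harg, Real.sin_pi_sub]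
    have : 0 < Real.sin a := Real.sin_pos_of_pos_of_lt_pi ha0 (lt_of_le_of_lt hab hbpi)
    positivity
  have hFb : F b < 0 := by
    rw [hF]
    simp only
    rw [show ((n:ℝ) + 1) * b = 2 * Real.pi by rw [hb]; field_simp]
    rw [Real.sin_two_pi, mul_zero, zero_add]
    have harg : (n:ℝ) * b = 2 * Real.pi - b := by
      rw [hb]; field_simp; ring
    rw [harg, show Real.sin (2 * Real.pi - b) = - Real.sin b by
      rw [Real.sin_sub]; simp]
    have hsb : 0 < Real.sin b := Real.sin_pos_of_pos_of_lt_pi (by positivity) hbpi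
    have he : 0 < Real.exp (((n:ℝ) - 1) / 2 * L) := Real.exp_pos _
    nlinarith
  have hcont : ContinuousOn F (Set.Icc a b) := by
    apply Continuous.continuousOn
    fun_prop
  obtain ⟨c, hc, hFc⟩ := intermediate_value_Icc' hab hcont ⟨hFb.le, hFa.le⟩
  exact ⟨c, lt_of_lt_of_le ha0 hc.1, lt_of_le_of_lt hc.2 hbpi, hFc⟩

lemma exists_zero_one' (q : ℝ) (hq : 1 < q) :
    ∃ c : ℝ, 0 < c ∧ c < Real.pi ∧
      Real.exp ((1 : ℝ) / 2 * Real.log q) * Real.sin (((1 : ℝ) + 1) * c)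
        + Real.exp (((1 : ℝ) - 1) / 2 * Real.log q) * Real.sin ((1 : ℝ) * c) = 0 := by
  have hL : 0 < Real.log q := Real.log_pos hq
  set F : ℝ → ℝ := fun θ =>
    Real.exp ((1 : ℝ) / 2 * Real.log q) * Real.sin (((1 : ℝ) + 1) * θ)
      + Real.exp (((1 : ℝ) - 1) / 2 * Real.log q) * Real.sin ((1 : ℝ) * θ) with hF
  have hpi := Real.pi_pos
  set a := Real.pi / 2 with ha
  set b := 5 * Real.pi / 6 with hb
  have hab : a ≤ b := by rw [ha, hb]; nlinarith
  have hFa : 0 < F a := by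
    rw [hF]
    simp only
    rw [show ((1:ℝ) + 1) * a = Real.pi by rw [ha]; ring, Real.sin_pi,
      show (1:ℝ) * a = Real.pi / 2 by rw [ha]; ring, Real.sin_pi_div_two]
    norm_num
  have hFb : F b < 0 := by
    rw [hF]
    simp only
    rw [show ((1:ℝ) + 1) * b = 2 * Real.pi - Real.pi / 3 by rw [hb]; ring,
      show Real.sin (2 * Real.pi - Real.pi / 3) = - Real.sin (Real.pi / 3) by
        rw [Real.sin_sub]; simp,
      Real.sin_pi_div_three,
      show (1:ℝ) * b = Real.pi - Real.pi / 6 by rw [hb]; ring,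
      Real.sin_pi_sub, Real.sin_pi_div_six]
    have he : 1 < Real.exp ((1:ℝ) / 2 * Real.log q) := by
      rw [show (1:ℝ) = Real.exp 0 by simp]
      apply Real.exp_lt_exp.mpr
      · positivity
    have hs3 : 1 < Real.sqrt 3 := by
      nlinarith [Real.sq_sqrt (by norm_num : (0:ℝ) ≤ 3), Real.sqrt_nonneg 3]
    norm_num
    nlinarith
  have hcont : ContinuousOn F (Set.Icc a b) := by
    apply Continuous.continuousOn
    fun_prop
  obtain ⟨c, hc, hFc⟩ := intermediate_value_Icc' hab hcont ⟨hFb.le, hFa.le⟩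
  refine ⟨c, lt_of_lt_of_le (by positivity) hc.1, lt_of_le_of_lt hc.2 ?_, hFc⟩
  rw [hb]; nlinarith

/-- For every `n ≥ 1`, `ψ_z(n)` is real for real `z ∈ (0, τ/2)`, and `ψ_z(n)` vanishes at
some real `z ∈ (0, τ/2)`. -/
theorem stmt13 (q : ℝ) (hq : 1 < q) (n : ℕ) (hn : 1 ≤ n) :
    (∀ z : ℝ, 0 < z → z < tauq q / 2 → (psiBall q (z : ℂ) n).im = 0) ∧
    ∃ z : ℝ, 0 < z ∧ z < tauq q / 2 ∧ psiBall q (z : ℂ) n = 0 := by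
  have hL : 0 < Real.log q := Real.log_pos hq
  have htau : tauq q / 2 = Real.pi / Real.log q := by
    unfold tauq; ring
  constructor
  · intro z _ _
    rw [psiBall_eq']
    exact Complex.ofReal_im _
  · -- existence of a zero
    obtain ⟨c, hc0, hcpi, hFc⟩ :
        ∃ c : ℝ, 0 < c ∧ c < Real.pi ∧
          Real.exp ((n : ℝ) / 2 * Real.log q) * Real.sin (((n : ℝ) + 1) * c)
            + Real.exp (((n : ℝ) - 1) / 2 * Real.log q) * Real.sin ((n : ℝ) * c) = 0 := by
      rcases eq_or_lt_of_le hn with h1 | h2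
      · obtain ⟨c, h1', h2', h3'⟩ := exists_zero_one' q hq
        refine ⟨c, h1', h2', ?_⟩
        rw [← h1]
        push_cast
        convert h3' using 3 <;> norm_num
      · exact exists_zero_ge2' q n h2
    have hsc : Real.sin c ≠ 0 := (Real.sin_pos_of_pos_of_lt_pi hc0 hcpi).ne'
    refine ⟨c / Real.log q, by positivity, ?_, ?_⟩
    · rw [htau]
      exact (div_lt_div_iff_of_pos_right hL).mpr hcpi
    · rw [psiBall_eq', div_mul_cancel₀ c hL.ne']
      have ht := telescope' q c hq hsc n
      rw [hFc] at ht
      have h0 : (1 + ∑ j ∈ Finset.Icc 1 n, (q + 1) * q ^ (j - 1) * phiR q c j) = 0 := by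
        rcases mul_eq_zero.mp ht with h | h
        · exact h
        · exact absurd h hsc
      rw [h0, mul_zero, Complex.ofReal_zero]
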